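/- Let a ∈ W₁ with ‖a‖_W < ρ and let f(x) = Σ_{i≥0} f_i x^i be analytic on D(ρ). Write f(T(a)) = T(f∘a) + E_{f(a)}. Then ‖E_{f(a)}‖_F ≤ (1/2)‖a'‖_W² g''(‖a‖_W), where g(x) = Σ_{i≥0} |f_i| x^i. -/

import Mathlib

/-- The semi-infinite Toeplitz matrix `T(a) = (a_{j-i})`, 0-based indices. -/
def Toep (a : ℤ → ℂ) : ℕ → ℕ → ℂ := fun i j => a ((j : ℤ) - i)

/-- Hankel matrix `H(a⁺) = (a_{i+j-1})`, 0-based indices. -/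
def HankP (a : ℤ → ℂ) : ℕ → ℕ → ℂ := fun i j => a ((i : ℤ) + j + 1)

/-- Hankel matrix `H(a⁻) = (a_{-i-j+1})`, 0-based indices. -/
def HankM (a : ℤ → ℂ) : ℕ → ℕ → ℂ := fun i j => a (-((i : ℤ) + j + 1))

/-- Product of two semi-infinite matrices. -/
noncomputable def tMul (A B : ℕ → ℕ → ℂ) : ℕ → ℕ → ℂ := fun i j => ∑' k : ℕ, A i k * B k j

/-- Coefficients of the power `a(z)^n` (bilateral convolution power). -/
noncomputable def convPow (a : ℤ → ℂ) : ℕ → ℤ → ℂ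
  | 0 => fun k => if k = 0 then 1 else 0
  | n + 1 => fun k => ∑' i : ℤ, a i * convPow a n (k - i)

/-- Entrywise ℓ¹ norm `‖·‖_F` of a semi-infinite matrix. -/
noncomputable def fNorm (E : ℕ → ℕ → ℂ) : ℝ := ∑' p : ℕ × ℕ, ‖E p.1 p.2‖

/-- Wiener norm `‖a‖_W = ∑|a_i|`. -/
noncomputable def wNorm (a : ℤ → ℂ) : ℝ := ∑' i : ℤ, ‖a i‖

/-- Norm of the derivative: `‖a'‖_W = ∑ |i|·|a_i|`. -/
noncomputable def dNorm (a : ℤ → ℂ) : ℝ := ∑' i : ℤ, |(i : ℝ)| * ‖a i‖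

/-- Power of a semi-infinite matrix. -/
noncomputable def mPow (A : ℕ → ℕ → ℂ) : ℕ → ℕ → ℕ → ℂ
  | 0 => fun i j => if i = j then 1 else 0
  | n + 1 => tMul A (mPow A n)

open scoped ENNReal NNReal

namespace CBaux

lemma enorm_tsum_le {ι : Type*} (g : ι → ℂ) :
    (‖∑' i, g i‖₊ : ℝ≥0∞) ≤ ∑' i, (‖g i‖₊ : ℝ≥0∞) := by
  by_cases h : Summable fun i => ‖g i‖₊
  · have hnorm : Summable fun i => ‖g i‖ := by
      simpa [← NNReal.summable_coe] using h
    rw [← ENNReal.coe_tsum h]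
    refine ENNReal.coe_le_coe.2 ?_
    rw [← NNReal.coe_le_coe, coe_nnnorm, NNReal.coe_tsum]
    simpa [coe_nnnorm] using norm_tsum_le_tsum_norm hnorm
  · have : ∑' i, (‖g i‖₊ : ℝ≥0∞) = ⊤ := by
      by_contra h'
      exact h (ENNReal.tsum_coe_ne_top_iff_summable.1 h')
    simp [this]

lemma summable_of_etsum_ne_top {ι : Type*} {g : ι → ℂ}
    (h : ∑' i, (‖g i‖₊ : ℝ≥0∞) ≠ ⊤) : Summable fun i => ‖g i‖ := by
  simpa [← NNReal.summable_coe] using ENNReal.tsum_coe_ne_top_iff_summable.1 h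

noncomputable def eW (a : ℤ → ℂ) : ℝ≥0∞ := ∑' i : ℤ, (‖a i‖₊ : ℝ≥0∞)
noncomputable def eD (a : ℤ → ℂ) : ℝ≥0∞ := ∑' i : ℤ, (i.natAbs : ℝ≥0∞) * (‖a i‖₊ : ℝ≥0∞)
noncomputable def eF (A : ℕ → ℕ → ℂ) : ℝ≥0∞ := ∑' pq : ℕ × ℕ, (‖A pq.1 pq.2‖₊ : ℝ≥0∞)

lemma eW_shift (c : ℤ → ℂ) (i : ℤ) : ∑' k : ℤ, (‖c (k - i)‖₊ : ℝ≥0∞) = eW c :=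
  (Equiv.subRight i).tsum_eq fun j => (‖c j‖₊ : ℝ≥0∞)

lemma eD_shift (c : ℤ → ℂ) (i : ℤ) :
    ∑' k : ℤ, ((k - i).natAbs : ℝ≥0∞) * (‖c (k - i)‖₊ : ℝ≥0∞) = eD c :=
  (Equiv.subRight i).tsum_eq fun j => ((j.natAbs : ℝ≥0∞) * (‖c j‖₊ : ℝ≥0∞))

lemma eW_conv (b c : ℤ → ℂ) :
    eW (fun k => ∑' i : ℤ, b i * c (k - i)) ≤ eW b * eW c := by
  calc ∑' k : ℤ, (‖∑' i : ℤ, b i * c (k - i)‖₊ : ℝ≥0∞)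
      ≤ ∑' k : ℤ, ∑' i : ℤ, (‖b i‖₊ : ℝ≥0∞) * (‖c (k - i)‖₊ : ℝ≥0∞) := by
        refine ENNReal.tsum_le_tsum fun k => (enorm_tsum_le _).trans_eq ?_
        exact tsum_congr fun i => by rw [nnnorm_mul, ENNReal.coe_mul]
    _ = ∑' i : ℤ, ∑' k : ℤ, (‖b i‖₊ : ℝ≥0∞) * (‖c (k - i)‖₊ : ℝ≥0∞) := ENNReal.tsum_comm
    _ = ∑' i : ℤ, (‖b i‖₊ : ℝ≥0∞) * eW c := by
        exact tsum_congr fun i => by rw [ENNReal.tsum_mul_left, eW_shift]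
    _ = eW b * eW c := ENNReal.tsum_mul_right

lemma eD_conv (b c : ℤ → ℂ) :
    eD (fun k => ∑' i : ℤ, b i * c (k - i)) ≤ eD b * eW c + eW b * eD c := by
  calc ∑' k : ℤ, (k.natAbs : ℝ≥0∞) * (‖∑' i : ℤ, b i * c (k - i)‖₊ : ℝ≥0∞)
      ≤ ∑' k : ℤ, ∑' i : ℤ, ((i.natAbs : ℝ≥0∞) + ((k - i).natAbs : ℝ≥0∞)) *
          ((‖b i‖₊ : ℝ≥0∞) * (‖c (k - i)‖₊ : ℝ≥0∞)) := by
        refine ENNReal.tsum_le_tsum fun k => ?_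
        calc (k.natAbs : ℝ≥0∞) * (‖∑' i : ℤ, b i * c (k - i)‖₊ : ℝ≥0∞)
            ≤ (k.natAbs : ℝ≥0∞) * ∑' i : ℤ, (‖b i‖₊ : ℝ≥0∞) * (‖c (k - i)‖₊ : ℝ≥0∞) := by
              refine mul_le_mul_right ((enorm_tsum_le _).trans_eq ?_) _
              exact tsum_congr fun i => by rw [nnnorm_mul, ENNReal.coe_mul]
          _ = ∑' i : ℤ, (k.natAbs : ℝ≥0∞) * ((‖b i‖₊ : ℝ≥0∞) * (‖c (k - i)‖₊ : ℝ≥0∞)) :=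
              ENNReal.tsum_mul_left.symm
          _ ≤ _ := by
              refine ENNReal.tsum_le_tsum fun i => ?_
              refine mul_le_mul_left ?_ _
              have : k.natAbs ≤ i.natAbs + (k - i).natAbs := by
                have := Int.natAbs_add_le i (k - i)
                simpa using this
              exact_mod_cast Nat.cast_le.2 this
    _ = (∑' k : ℤ, ∑' i : ℤ, (i.natAbs : ℝ≥0∞) * ((‖b i‖₊ : ℝ≥0∞) * (‖c (k - i)‖₊ : ℝ≥0∞)))
        + ∑' k : ℤ, ∑' i : ℤ, ((k - i).natAbs : ℝ≥0∞) *
            ((‖b i‖₊ : ℝ≥0∞) * (‖c (k - i)‖₊ : ℝ≥0∞)) := by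
        rw [← ENNReal.tsum_add]
        refine tsum_congr fun k => ?_
        rw [← ENNReal.tsum_add]
        exact tsum_congr fun i => by ring
    _ ≤ eD b * eW c + eW b * eD c := by
        refine add_le_add ?_ ?_
        · refine le_of_eq ?_
          calc ∑' k : ℤ, ∑' i : ℤ, (i.natAbs : ℝ≥0∞) * ((‖b i‖₊ : ℝ≥0∞) * (‖c (k - i)‖₊ : ℝ≥0∞))
              = ∑' i : ℤ, ∑' k : ℤ, ((i.natAbs : ℝ≥0∞) * (‖b i‖₊ : ℝ≥0∞)) * (‖c (k - i)‖₊ : ℝ≥0∞) := by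
                rw [ENNReal.tsum_comm]
                exact tsum_congr fun i => tsum_congr fun k => by ring
            _ = ∑' i : ℤ, ((i.natAbs : ℝ≥0∞) * (‖b i‖₊ : ℝ≥0∞)) * eW c := by
                exact tsum_congr fun i => by rw [ENNReal.tsum_mul_left, eW_shift]
            _ = eD b * eW c := ENNReal.tsum_mul_right
        · refine le_of_eq ?_
          calc ∑' k : ℤ, ∑' i : ℤ, ((k - i).natAbs : ℝ≥0∞) *
                ((‖b i‖₊ : ℝ≥0∞) * (‖c (k - i)‖₊ : ℝ≥0∞))
              = ∑' i : ℤ, ∑' k : ℤ, (‖b i‖₊ : ℝ≥0∞) *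
                  (((k - i).natAbs : ℝ≥0∞) * (‖c (k - i)‖₊ : ℝ≥0∞)) := by
                rw [ENNReal.tsum_comm]
                exact tsum_congr fun i => tsum_congr fun k => by ring
            _ = ∑' i : ℤ, (‖b i‖₊ : ℝ≥0∞) * eD c := by
                exact tsum_congr fun i => by rw [ENNReal.tsum_mul_left, eD_shift]
            _ = eW b * eD c := ENNReal.tsum_mul_right

lemma eW_convPow (a : ℤ → ℂ) (n : ℕ) : eW (convPow a n) ≤ eW a ^ n := by
  induction n with
  | zero =>
    have : eW (convPow a 0) = 1 := by
      have h : ∀ k : ℤ, (‖convPow a 0 k‖₊ : ℝ≥0∞) = if k = 0 then 1 else 0 := by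
        intro k
        simp only [convPow]
        split_ifs <;> simp
      rw [eW, tsum_congr h, tsum_ite_eq]
    simp [this]
  | succ n ih =>
    have h1 : eW (convPow a (n + 1)) ≤ eW a * eW (convPow a n) := eW_conv a (convPow a n)
    calc eW (convPow a (n + 1)) ≤ eW a * eW (convPow a n) := h1
      _ ≤ eW a * eW a ^ n := mul_le_mul_right ih _
      _ = eW a ^ (n + 1) := (pow_succ' _ _).symm

lemma eD_convPow (a : ℤ → ℂ) (n : ℕ) : eD (convPow a n) ≤ n * eW a ^ (n - 1) * eD a := by
  induction n with
  | zero =>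
    have : eD (convPow a 0) = 0 := by
      rw [eD]
      have h : ∀ k : ℤ, (k.natAbs : ℝ≥0∞) * (‖convPow a 0 k‖₊ : ℝ≥0∞) = 0 := by
        intro k
        by_cases hk : k = 0
        · subst hk; simp
        · simp only [convPow]
          simp [hk]
      simp [tsum_congr h]
    simp [this]
  | succ n ih =>
    have h1 : eD (convPow a (n + 1)) ≤ eD a * eW (convPow a n) + eW a * eD (convPow a n) :=
      eD_conv a (convPow a n)
    calc eD (convPow a (n + 1))
        ≤ eD a * eW (convPow a n) + eW a * eD (convPow a n) := h1
      _ ≤ eD a * eW a ^ n + eW a * (n * eW a ^ (n - 1) * eD a) := by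
          exact add_le_add (mul_le_mul_right (eW_convPow a n) _) (mul_le_mul_right ih _)
      _ ≤ (n + 1 : ℕ) * eW a ^ n * eD a := by
          rcases n with _ | m
          · simp
          · have : eW a * ((m + 1 : ℕ) * eW a ^ (m + 1 - 1) * eD a)
                = (m + 1 : ℕ) * eW a ^ (m + 1) * eD a := by
              simp only [Nat.add_sub_cancel]
              rw [← mul_assoc, ← mul_assoc]
              rw [show eW a * ((m + 1 : ℕ) : ℝ≥0∞) = ((m + 1 : ℕ) : ℝ≥0∞) * eW a from mul_comm _ _]
              rw [mul_assoc ((m + 1 : ℕ) : ℝ≥0∞), ← pow_succ']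
            rw [this]
            have hcast : ((m + 1 + 1 : ℕ) : ℝ≥0∞) = (m + 1 : ℕ) + 1 := by push_cast; ring
            rw [hcast, add_mul, add_mul, one_mul]
            rw [mul_comm (eD a) (eW a ^ (m + 1)), add_comm]


lemma count_lt (j : ℤ) (c : ℝ≥0∞) :
    ∑' p : ℕ, (if (p : ℤ) < j then c else 0) ≤ (j.natAbs : ℝ≥0∞) * c := by
  have h0 : ∀ p ∉ Finset.range j.toNat, (if ((p : ℕ) : ℤ) < j then c else 0) = 0 := by
    intro p hp
    rw [Finset.mem_range] at hp
    rw [if_neg]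
    rw [← Int.lt_toNat]
    omega
  rw [tsum_eq_sum h0]
  calc ∑ p ∈ Finset.range j.toNat, (if ((p : ℕ) : ℤ) < j then c else 0)
      ≤ ∑ _p ∈ Finset.range j.toNat, c := by
        refine Finset.sum_le_sum fun p _ => ?_
        split_ifs <;> simp
    _ = (j.toNat : ℝ≥0∞) * c := by simp [Finset.sum_const, nsmul_eq_mul]
    _ ≤ (j.natAbs : ℝ≥0∞) * c := by
        refine mul_le_mul_left ?_ _
        have : j.toNat ≤ j.natAbs := by
          rcases j with n | n
          · simp [Int.toNat, Int.natAbs]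
          · simp [Int.toNat, Int.natAbs]
        exact_mod_cast Nat.cast_le.2 this

lemma hank_count (b : ℤ → ℂ) :
    (∑' mp : ℕ × ℕ, (‖b ((mp.1 : ℤ) + mp.2 + 1)‖₊ : ℝ≥0∞)) ≤
      ∑' j : ℤ, (j.natAbs : ℝ≥0∞) * (‖b j‖₊ : ℝ≥0∞) := by
  set h : ℤ × ℕ → ℝ≥0∞ := fun jp => if (jp.2 : ℤ) < jp.1 then (‖b jp.1‖₊ : ℝ≥0∞) else 0 with hh
  have hφ : Function.Injective (fun mp : ℕ × ℕ => (((mp.1 : ℤ) + mp.2 + 1, mp.2) : ℤ × ℕ)) := by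
    intro x y hxy
    simp only [Prod.mk.injEq] at hxy
    obtain ⟨h1, h2⟩ := hxy
    ext
    · omega
    · exact h2
  calc (∑' mp : ℕ × ℕ, (‖b ((mp.1 : ℤ) + mp.2 + 1)‖₊ : ℝ≥0∞))
      = ∑' mp : ℕ × ℕ, h ((mp.1 : ℤ) + mp.2 + 1, mp.2) := by
        refine tsum_congr fun mp => ?_
        rw [hh]
        simp only []
        rw [if_pos (by omega)]
    _ ≤ ∑' jp : ℤ × ℕ, h jp := ENNReal.tsum_comp_le_tsum_of_injective hφ h
    _ = ∑' j : ℤ, ∑' p : ℕ, h (j, p) := ENNReal.tsum_prod'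
    _ ≤ ∑' j : ℤ, (j.natAbs : ℝ≥0∞) * (‖b j‖₊ : ℝ≥0∞) :=
        ENNReal.tsum_le_tsum fun j => count_lt j _

lemma hank_count_neg (a : ℤ → ℂ) :
    (∑' mp : ℕ × ℕ, (‖a (-((mp.1 : ℤ) + mp.2 + 1))‖₊ : ℝ≥0∞)) ≤ eD a := by
  have h1 := hank_count (fun j => a (-j))
  refine h1.trans_eq ?_
  rw [eD, ← (Equiv.neg ℤ).tsum_eq (fun j => (j.natAbs : ℝ≥0∞) * (‖a j‖₊ : ℝ≥0∞))]
  exact tsum_congr fun j => by simp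


lemma enorm_tsum_mul_le {ι : Type*} (g h : ι → ℂ) :
    (‖∑' i, g i * h i‖₊ : ℝ≥0∞) ≤ ∑' i, (‖g i‖₊ : ℝ≥0∞) * (‖h i‖₊ : ℝ≥0∞) :=
  (enorm_tsum_le _).trans_eq (tsum_congr fun i => by rw [nnnorm_mul, ENNReal.coe_mul])

lemma key_step (a : ℤ → ℂ) (ha : Summable fun i : ℤ => ‖a i‖)
    (E : ℕ → ℕ → ℕ → ℂ)
    (hE : ∀ i : ℕ, ∀ p q : ℕ, mPow (Toep a) i p q = Toep (convPow a i) p q + E i p q)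
    (n : ℕ) (hfin : eF (E n) ≠ ⊤) :
    eF (E (n + 1)) ≤ eW a * eF (E n) + eD a * eD (convPow a n) := by
  have hWfin : eW a ≠ ⊤ := by
    rw [eW]
    exact ENNReal.tsum_coe_ne_top_iff_summable.2 (by simpa [← NNReal.summable_coe] using ha)
  have hWc : Summable fun j : ℤ => ‖convPow a n j‖ := by
    apply summable_of_etsum_ne_top (g := convPow a n)
    exact ne_top_of_le_ne_top (ENNReal.pow_ne_top hWfin) (eW_convPow a n)
  set Mn := ∑' j : ℤ, ‖convPow a n j‖ with hMndef
  have hMn : ∀ j : ℤ, ‖convPow a n j‖ ≤ Mn := fun j => Summable.le_tsum hWc j fun _ _ => norm_nonneg _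
  set Wr := ∑' i : ℤ, ‖a i‖ with hWrdef
  have hWr : ∀ j : ℤ, ‖a j‖ ≤ Wr := fun j => Summable.le_tsum ha j fun _ _ => norm_nonneg _
  have hEsum : Summable fun pq : ℕ × ℕ => ‖E n pq.1 pq.2‖ := summable_of_etsum_ne_top hfin
  have hid : ∀ p q : ℕ, E (n + 1) p q =
      (∑' k : ℕ, a ((k : ℤ) - p) * E n k q)
        - ∑' m : ℕ, a (-((p : ℤ) + m + 1)) * convPow a n ((q : ℤ) + m + 1) := by
    intro p q
    have hinj : Function.Injective fun k : ℕ => (k : ℤ) - p := fun x y h => by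
      simpa using h
    have hacomp : Summable fun k : ℕ => ‖a ((k : ℤ) - p)‖ := ha.comp_injective hinj
    have S1 : Summable fun k : ℕ => a ((k : ℤ) - p) * convPow a n ((q : ℤ) - k) := by
      apply Summable.of_norm
      refine Summable.of_nonneg_of_le (fun k => norm_nonneg _) (fun k => ?_) (hacomp.mul_right Mn)
      rw [norm_mul]
      exact mul_le_mul_of_nonneg_left (hMn _) (norm_nonneg _)
    have S2 : Summable fun k : ℕ => a ((k : ℤ) - p) * E n k q := by
      apply Summable.of_norm
      have hEq : Summable fun k : ℕ => ‖E n k q‖ := by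
        have := hEsum.prod_symm.prod_factor q
        simpa using this
      refine Summable.of_nonneg_of_le (fun k => norm_nonneg _) (fun k => ?_) (hEq.mul_left Wr)
      rw [norm_mul]
      exact mul_le_mul_of_nonneg_right (hWr _) (norm_nonneg _)
    have SZ : Summable fun k : ℤ => a (k - p) * convPow a n ((q : ℤ) - k) := by
      apply Summable.of_norm
      have haz : Summable fun k : ℤ => ‖a (k - (p : ℤ))‖ :=
        ((Equiv.subRight (p : ℤ)).summable_iff (f := fun j : ℤ => ‖a j‖)).2 ha
      refine Summable.of_nonneg_of_le (fun k => norm_nonneg _) (fun k => ?_) (haz.mul_right Mn)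
      rw [norm_mul]
      exact mul_le_mul_of_nonneg_left (hMn _) (norm_nonneg _)
    have hneginj : Function.Injective fun m : ℕ => -((m : ℤ) + 1) := fun x y h => by
      simp only [neg_inj, add_left_inj] at h
      exact_mod_cast h
    have SZneg : Summable fun m : ℕ =>
        a (-((m : ℤ) + 1) - p) * convPow a n ((q : ℤ) - -((m : ℤ) + 1)) := by
      have := SZ.comp_injective hneginj
      simpa [Function.comp_def] using this
    have h1 : mPow (Toep a) (n + 1) p q =
        (∑' k : ℕ, a ((k : ℤ) - p) * convPow a n ((q : ℤ) - k))
          + ∑' k : ℕ, a ((k : ℤ) - p) * E n k q := by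
      have e0 : mPow (Toep a) (n + 1) p q = ∑' k : ℕ, Toep a p k * mPow (Toep a) n k q := rfl
      rw [e0, ← Summable.tsum_add S1 S2]
      refine tsum_congr fun k => ?_
      rw [hE n k q]
      simp only [Toep, mul_add]
    have h2 : Toep (convPow a (n + 1)) p q =
        (∑' k : ℕ, a ((k : ℤ) - p) * convPow a n ((q : ℤ) - k))
          + ∑' m : ℕ, a (-((p : ℤ) + m + 1)) * convPow a n ((q : ℤ) + m + 1) := by
      have e0 : Toep (convPow a (n + 1)) p q
          = ∑' i : ℤ, a i * convPow a n ((q : ℤ) - p - i) := rfl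
      have hre : (∑' i : ℤ, a i * convPow a n ((q : ℤ) - p - i))
          = ∑' k : ℤ, a (k - p) * convPow a n ((q : ℤ) - k) := by
        rw [← (Equiv.subRight (p : ℤ)).tsum_eq
          (f := fun i : ℤ => a i * convPow a n ((q : ℤ) - (p : ℤ) - i))]
        refine tsum_congr fun k => ?_
        simp only [Equiv.subRight_apply]
        congr 2
        ring
      rw [e0, hre,
        tsum_of_nat_of_neg_add_one (f := fun k : ℤ => a (k - p) * convPow a n ((q : ℤ) - k))
          S1 SZneg]
      congr 1
      refine tsum_congr fun m => ?_
      congr 2 <;> ring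
    have h3 := hE (n + 1) p q
    rw [h1, h2] at h3
    linear_combination -h3
  have SB : (∑' pq : ℕ × ℕ, ∑' k : ℕ,
        (‖a ((k : ℤ) - pq.1)‖₊ : ℝ≥0∞) * (‖E n k pq.2‖₊ : ℝ≥0∞))
      ≤ eW a * eF (E n) := by
    rw [ENNReal.tsum_prod']
    have step1 : ∀ p : ℕ, (∑' q : ℕ, ∑' k : ℕ,
        (‖a ((k : ℤ) - p)‖₊ : ℝ≥0∞) * (‖E n k q‖₊ : ℝ≥0∞))
        = ∑' k : ℕ, (‖a ((k : ℤ) - p)‖₊ : ℝ≥0∞) * ∑' q : ℕ, (‖E n k q‖₊ : ℝ≥0∞) := by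
      intro p
      rw [ENNReal.tsum_comm]
      exact tsum_congr fun k => ENNReal.tsum_mul_left
    calc (∑' p : ℕ, ∑' q : ℕ, ∑' k : ℕ,
          (‖a ((k : ℤ) - p)‖₊ : ℝ≥0∞) * (‖E n k q‖₊ : ℝ≥0∞))
        = ∑' k : ℕ, (∑' p : ℕ, (‖a ((k : ℤ) - p)‖₊ : ℝ≥0∞))
            * ∑' q : ℕ, (‖E n k q‖₊ : ℝ≥0∞) := by
          rw [tsum_congr step1, ENNReal.tsum_comm]
          exact tsum_congr fun k => ENNReal.tsum_mul_right
      _ ≤ ∑' k : ℕ, eW a * ∑' q : ℕ, (‖E n k q‖₊ : ℝ≥0∞) := by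
          refine ENNReal.tsum_le_tsum fun k => mul_le_mul_left ?_ _
          have hinj : Function.Injective fun p : ℕ => (k : ℤ) - p := fun x y h => by
            simpa using h
          exact ENNReal.tsum_comp_le_tsum_of_injective hinj fun j => (‖a j‖₊ : ℝ≥0∞)
      _ = eW a * eF (E n) := by
          rw [ENNReal.tsum_mul_left, eF, ENNReal.tsum_prod']
  have SC : (∑' pq : ℕ × ℕ, ∑' m : ℕ,
        (‖a (-((pq.1 : ℤ) + m + 1))‖₊ : ℝ≥0∞) * (‖convPow a n ((pq.2 : ℤ) + m + 1)‖₊ : ℝ≥0∞))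
      ≤ eD a * eD (convPow a n) := by
    set c := convPow a n with hc
    set Yc : ℕ → ℝ≥0∞ := fun m => ∑' q : ℕ, (‖c ((q : ℤ) + m + 1)‖₊ : ℝ≥0∞) with hYc
    set SY := ∑' m : ℕ, Yc m with hSY
    have hSYle : SY ≤ eD c := by
      rw [hSY]
      have : (∑' m : ℕ, Yc m) = ∑' mq : ℕ × ℕ, (‖c ((mq.1 : ℤ) + mq.2 + 1)‖₊ : ℝ≥0∞) := by
        rw [ENNReal.tsum_prod']
        exact tsum_congr fun m => tsum_congr fun q => by rw [show (q : ℤ) + m + 1 = (m : ℤ) + q + 1 by ring]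
      rw [this]
      exact hank_count c
    have hXle : (∑' pm : ℕ × ℕ, (‖a (-((pm.1 : ℤ) + pm.2 + 1))‖₊ : ℝ≥0∞)) ≤ eD a :=
      hank_count_neg a
    calc (∑' pq : ℕ × ℕ, ∑' m : ℕ,
          (‖a (-((pq.1 : ℤ) + m + 1))‖₊ : ℝ≥0∞) * (‖c ((pq.2 : ℤ) + m + 1)‖₊ : ℝ≥0∞))
        = ∑' p : ℕ, ∑' q : ℕ, ∑' m : ℕ,
            (‖a (-((p : ℤ) + m + 1))‖₊ : ℝ≥0∞) * (‖c ((q : ℤ) + m + 1)‖₊ : ℝ≥0∞) := by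
          rw [ENNReal.tsum_prod']
      _ = ∑' p : ℕ, ∑' m : ℕ,
            (‖a (-((p : ℤ) + m + 1))‖₊ : ℝ≥0∞) * Yc m := by
          refine tsum_congr fun p => ?_
          rw [ENNReal.tsum_comm]
          exact tsum_congr fun m => ENNReal.tsum_mul_left
      _ ≤ ∑' p : ℕ, ∑' m : ℕ, (‖a (-((p : ℤ) + m + 1))‖₊ : ℝ≥0∞) * SY := by
          refine ENNReal.tsum_le_tsum fun p => ENNReal.tsum_le_tsum fun m =>
            mul_le_mul_right (ENNReal.le_tsum m) _
      _ = (∑' pm : ℕ × ℕ, (‖a (-((pm.1 : ℤ) + pm.2 + 1))‖₊ : ℝ≥0∞)) * SY := by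
          rw [ENNReal.tsum_prod']
          rw [← ENNReal.tsum_mul_right]
          exact tsum_congr fun p => ENNReal.tsum_mul_right
      _ ≤ eD a * eD c := mul_le_mul' hXle hSYle
  calc eF (E (n + 1))
      ≤ ∑' pq : ℕ × ℕ,
          ((∑' k : ℕ, (‖a ((k : ℤ) - pq.1)‖₊ : ℝ≥0∞) * (‖E n k pq.2‖₊ : ℝ≥0∞))
            + ∑' m : ℕ, (‖a (-((pq.1 : ℤ) + m + 1))‖₊ : ℝ≥0∞)
                * (‖convPow a n ((pq.2 : ℤ) + m + 1)‖₊ : ℝ≥0∞)) := by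
        refine ENNReal.tsum_le_tsum fun pq => ?_
        rw [hid pq.1 pq.2]
        refine le_trans ?_ (add_le_add (enorm_tsum_mul_le _ _) (enorm_tsum_mul_le _ _))
        rw [← ENNReal.coe_add]
        exact_mod_cast nnnorm_sub_le _ _
    _ = (∑' pq : ℕ × ℕ, ∑' k : ℕ,
          (‖a ((k : ℤ) - pq.1)‖₊ : ℝ≥0∞) * (‖E n k pq.2‖₊ : ℝ≥0∞))
        + ∑' pq : ℕ × ℕ, ∑' m : ℕ,
          (‖a (-((pq.1 : ℤ) + m + 1))‖₊ : ℝ≥0∞)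
            * (‖convPow a n ((pq.2 : ℤ) + m + 1)‖₊ : ℝ≥0∞) := ENNReal.tsum_add
    _ ≤ eW a * eF (E n) + eD a * eD (convPow a n) := add_le_add SB SC


lemma E_bound (a : ℤ → ℂ) (ha : Summable fun i : ℤ => ‖a i‖)
    (ha' : Summable fun i : ℤ => |(i : ℝ)| * ‖a i‖)
    (E : ℕ → ℕ → ℕ → ℂ)
    (hE : ∀ i : ℕ, ∀ p q : ℕ, mPow (Toep a) i p q = Toep (convPow a i) p q + E i p q)
    (n : ℕ) :
    eF (E n) ≤ ((n * (n - 1) / 2 : ℕ) : ℝ≥0∞) * eD a ^ 2 * eW a ^ (n - 2) := by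
  have hWfin : eW a ≠ ⊤ := by
    rw [eW]
    exact ENNReal.tsum_coe_ne_top_iff_summable.2 (by simpa [← NNReal.summable_coe] using ha)
  have hDfin : eD a ≠ ⊤ := by
    rw [eD]
    have heq : ∀ i : ℤ, (i.natAbs : ℝ≥0∞) * (‖a i‖₊ : ℝ≥0∞)
        = (((i.natAbs : ℝ≥0) * ‖a i‖₊ : ℝ≥0) : ℝ≥0∞) := by
      intro i; push_cast; ring
    rw [tsum_congr heq]
    refine ENNReal.tsum_coe_ne_top_iff_summable.2 ?_
    rw [← NNReal.summable_coe]
    refine Summable.congr ha' fun i => ?_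
    push_cast
    rw [Nat.cast_natAbs, Int.cast_abs]
  have hE0 : eF (E 0) = 0 := by
    have h0 : ∀ p q : ℕ, E 0 p q = 0 := by
      intro p q
      have h := hE 0 p q
      simp only [mPow, Toep, convPow] at h
      by_cases hpq : p = q
      · subst hpq
        rw [if_pos rfl, if_pos (by ring)] at h
        linear_combination -h
      · rw [if_neg hpq, if_neg (by
          intro hc
          exact hpq (by omega))] at h
        linear_combination -h
    rw [eF]
    have : ∀ pq : ℕ × ℕ, (‖E 0 pq.1 pq.2‖₊ : ℝ≥0∞) = 0 := fun pq => by simp [h0]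
    simp [tsum_congr this]
  induction n with
  | zero => simp [hE0]
  | succ n ih =>
    have hfin : eF (E n) ≠ ⊤ := by
      refine ne_top_of_le_ne_top ?_ ih
      exact ENNReal.mul_ne_top (ENNReal.mul_ne_top (ENNReal.natCast_ne_top _)
        (ENNReal.pow_ne_top hDfin)) (ENNReal.pow_ne_top hWfin)
    have hstep := key_step a ha E hE n hfin
    have hconv := eD_convPow a n
    have hmain : eF (E (n + 1)) ≤
        eW a * (((n * (n - 1) / 2 : ℕ) : ℝ≥0∞) * eD a ^ 2 * eW a ^ (n - 2))
          + eD a * ((n : ℝ≥0∞) * eW a ^ (n - 1) * eD a) := by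
      refine hstep.trans (add_le_add (mul_le_mul_right ih _) (mul_le_mul_right hconv _))
    refine hmain.trans ?_
    rcases n with _ | m
    · simp
    rcases m with _ | m
    · have h1 : (1 * (1 - 1) / 2 : ℕ) = 0 := by norm_num
      have h2 : ((0 + 1 + 1) * ((0 + 1 + 1) - 1) / 2 : ℕ) = 1 := by norm_num
      simp only [h1, h2, Nat.cast_zero, Nat.cast_one, zero_mul, mul_zero, zero_add,
        Nat.cast_ofNat, pow_zero, mul_one, one_mul]
      rw [pow_two]
      simp
    · have hsub1 : (m + 1 + 1) - 1 = m + 1 := by omega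
      have hsub2 : (m + 1 + 1) - 2 = m := by omega
      have hsub3 : (m + 1 + 1 + 1) - 1 = m + 1 + 1 := by omega
      have hsub4 : (m + 1 + 1 + 1) - 2 = m + 1 := by omega
      rw [hsub1, hsub2, hsub3, hsub4]
      refine le_of_eq ?_
      have harith : (m + 1 + 1) * (m + 1) / 2 + (m + 1 + 1) = (m + 1 + 1 + 1) * (m + 1 + 1) / 2 := by
        rw [show (m + 1 + 1 + 1) * (m + 1 + 1) = (m + 1 + 1) * (m + 1) + 2 * (m + 1 + 1) by ring,
          Nat.add_mul_div_left _ _ two_pos]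
      calc eW a * ((((m + 1 + 1) * (m + 1) / 2 : ℕ) : ℝ≥0∞) * eD a ^ 2 * eW a ^ m)
            + eD a * (((m + 1 + 1 : ℕ) : ℝ≥0∞) * eW a ^ (m + 1) * eD a)
          = ((((m + 1 + 1) * (m + 1) / 2 : ℕ) : ℝ≥0∞) + ((m + 1 + 1 : ℕ) : ℝ≥0∞))
              * eD a ^ 2 * eW a ^ (m + 1) := by ring
        _ = (((m + 1 + 1 + 1) * (m + 1 + 1) / 2 : ℕ) : ℝ≥0∞) * eD a ^ 2 * eW a ^ (m + 1) := by
            rw [← Nat.cast_add, harith]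

end CBaux

/-- Let `a ∈ W₁` with `‖a‖_W < ρ` and `f(x) = Σ f_i x^i` analytic on `D(ρ)`.
Writing `T(a)^i = T(a^i) + E_i` and `f(T(a)) = T(f∘a) + E_{f(a)}` with
`E_{f(a)} = Σ_i f_i E_i`, one has
`‖E_{f(a)}‖_F ≤ (1/2) ‖a'‖_W² g''(‖a‖_W)` where `g(x) = Σ |f_i| x^i`. -/
theorem correction_bound_function (a : ℤ → ℂ)
    (ha : Summable fun i : ℤ => ‖a i‖)
    (ha' : Summable fun i : ℤ => |(i : ℝ)| * ‖a i‖)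
    (ρ : ℝ) (hρ : wNorm a < ρ)
    (f : ℕ → ℂ)
    (hf : ∀ x : ℂ, ‖x‖ < ρ → Summable fun i : ℕ => f i * x ^ i)
    (E : ℕ → ℕ → ℕ → ℂ)
    (hE : ∀ i : ℕ, ∀ p q : ℕ,
      mPow (Toep a) i p q = Toep (convPow a i) p q + E i p q) :
    fNorm (fun p q => ∑' i : ℕ, f i * E i p q) ≤
      1 / 2 * dNorm a ^ 2 *
        ∑' i : ℕ, (i * (i - 1) : ℝ) * ‖f i‖ * wNorm a ^ (i - 2) := by
  classical
  set w := wNorm a with hwdef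
  set d := dNorm a with hddef
  have hw0 : 0 ≤ w := tsum_nonneg fun i => norm_nonneg _
  have hd0 : 0 ≤ d := tsum_nonneg fun i => mul_nonneg (abs_nonneg _) (norm_nonneg _)
  set S : ℕ → ℝ := fun i => (i * (i - 1) : ℝ) * ‖f i‖ * w ^ (i - 2) with hSdef
  have hco : ∀ i : ℕ, 0 ≤ (i : ℝ) * ((i : ℝ) - 1) := by
    intro i
    rcases i with _ | j
    · norm_num
    · have h1 : ((j + 1 : ℕ) : ℝ) - 1 = (j : ℝ) := by push_cast; ring
      rw [h1]
      positivity
  have hS0 : ∀ i, 0 ≤ S i := by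
    intro i
    simp only [hSdef]
    exact mul_nonneg (mul_nonneg (hco i) (norm_nonneg _)) (pow_nonneg hw0 _)
  -- summability of S
  set r := (w + ρ) / 2 with hrdef
  have hwr : w < r := by rw [hrdef]; linarith
  have hr0 : 0 < r := lt_of_le_of_lt hw0 hwr
  have hrρ : r < ρ := by rw [hrdef]; linarith
  have hxnorm : ‖(r : ℂ)‖ < ρ := by
    rw [Complex.norm_real, Real.norm_eq_abs, abs_of_pos hr0]; exact hrρ
  have hsum := hf (r : ℂ) hxnorm
  have htend : Filter.Tendsto (fun i => ‖f i * (r : ℂ) ^ i‖) Filter.atTop (nhds 0) := by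
    simpa using hsum.tendsto_atTop_zero.norm
  obtain ⟨M, hM⟩ := htend.bddAbove_range
  have hM' : ∀ i, ‖f i‖ * r ^ i ≤ M := by
    intro i
    have := hM (Set.mem_range_self i)
    rwa [norm_mul, norm_pow, Complex.norm_real, Real.norm_eq_abs, abs_of_pos hr0] at this
  have hM0 : 0 ≤ M := le_trans (by positivity) (hM' 0)
  set t := w / r with htdef
  have ht0 : 0 ≤ t := div_nonneg hw0 hr0.le
  have ht1 : t < 1 := (div_lt_one hr0).2 hwr
  have htn : ‖t‖ < 1 := by rw [Real.norm_eq_abs, abs_of_nonneg ht0]; exact ht1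
  have hmaj : Summable (fun i : ℕ => (M / r ^ 2) * ((i : ℝ) * ((i : ℝ) - 1) * t ^ (i - 2))) := by
    refine Summable.mul_left _ ?_
    rw [← summable_nat_add_iff 2]
    have hs2 := summable_pow_mul_geometric_of_norm_lt_one (R := ℝ) 2 htn
    have hs1 := summable_pow_mul_geometric_of_norm_lt_one (R := ℝ) 1 htn
    have hs0 := summable_pow_mul_geometric_of_norm_lt_one (R := ℝ) 0 htn
    refine Summable.congr ((hs2.add (hs1.mul_left 3)).add (hs0.mul_left 2)) ?_
    intro j
    simp only [Nat.add_sub_cancel]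
    push_cast
    ring
  have hSsum : Summable S := by
    refine Summable.of_nonneg_of_le hS0 (fun i => ?_) hmaj
    rcases i with _ | _ | i
    · simp only [hSdef]
      norm_num
    · simp only [hSdef]
      norm_num
    · set i2 := i + 1 + 1 with hi2
      have hfle : ‖f i2‖ ≤ M / r ^ i2 := by
        rw [le_div_iff₀ (pow_pos hr0 i2)]
        exact hM' i2
      have hsub : i2 - 2 = i := by omega
      have hkey : ‖f i2‖ * w ^ (i2 - 2) ≤ M / r ^ 2 * t ^ (i2 - 2) := by
        have ht : t ^ (i2 - 2) = w ^ (i2 - 2) / r ^ (i2 - 2) := by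
          rw [htdef, div_pow]
        rw [ht, div_mul_div_comm]
        have hrpow : r ^ 2 * r ^ (i2 - 2) = r ^ i2 := by
          rw [← pow_add]
          congr 1
          omega
        rw [hrpow]
        calc ‖f i2‖ * w ^ (i2 - 2) ≤ (M / r ^ i2) * w ^ (i2 - 2) :=
              mul_le_mul_of_nonneg_right hfle (pow_nonneg hw0 _)
          _ = M * w ^ (i2 - 2) / r ^ i2 := by ring
      calc S i2 = ((i2 : ℝ) * ((i2 : ℝ) - 1)) * (‖f i2‖ * w ^ (i2 - 2)) := by
            simp only [hSdef]; ring
        _ ≤ ((i2 : ℝ) * ((i2 : ℝ) - 1)) * (M / r ^ 2 * t ^ (i2 - 2)) :=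
            mul_le_mul_of_nonneg_left hkey (hco i2)
        _ = M / r ^ 2 * ((i2 : ℝ) * ((i2 : ℝ) - 1) * t ^ (i2 - 2)) := by ring
  -- ENNReal side
  have hEb := CBaux.E_bound a ha ha' E hE
  have heW : CBaux.eW a = ENNReal.ofReal w := by
    rw [CBaux.eW, hwdef, wNorm, ENNReal.ofReal_tsum_of_nonneg (fun i => norm_nonneg _) ha]
    exact tsum_congr fun i => ((ofReal_norm _).trans (enorm_eq_nnnorm _)).symm
  have heD : CBaux.eD a = ENNReal.ofReal d := by
    rw [CBaux.eD, hddef, dNorm,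
      ENNReal.ofReal_tsum_of_nonneg (fun i => mul_nonneg (abs_nonneg _) (norm_nonneg _)) ha']
    refine tsum_congr fun i => ?_
    rw [ENNReal.ofReal_mul (abs_nonneg _), ((ofReal_norm _).trans (enorm_eq_nnnorm _))]
    congr 1
    have habs : |(i : ℝ)| = ((i.natAbs : ℕ) : ℝ) := by
      rw [Nat.cast_natAbs, Int.cast_abs]
    rw [habs, ENNReal.ofReal_natCast]
  have hcast : ∀ i : ℕ, ((i * (i - 1) / 2 : ℕ) : ℝ) = (i : ℝ) * ((i : ℝ) - 1) / 2 := by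
    intro i
    rcases i with _ | j
    · norm_num
    · have h2 : 2 ∣ (j + 1) * ((j + 1) - 1) := by
        rw [Nat.add_sub_cancel]
        rcases Nat.even_or_odd j with hj | hj
        · exact Dvd.dvd.mul_left hj.two_dvd _
        · exact Dvd.dvd.mul_right (Even.two_dvd (Odd.add_one hj)) _
      rw [Nat.cast_div h2 (by norm_num), Nat.add_sub_cancel]
      push_cast
      ring
  have hterm : ∀ i : ℕ,
      (‖f i‖₊ : ℝ≥0∞) *
          (((i * (i - 1) / 2 : ℕ) : ℝ≥0∞) * CBaux.eD a ^ 2 * CBaux.eW a ^ (i - 2))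
        = ENNReal.ofReal (1 / 2 * d ^ 2 * S i) := by
    intro i
    rw [heW, heD, ← ((ofReal_norm _).trans (enorm_eq_nnnorm _)), ← ENNReal.ofReal_pow hd0,
      ← ENNReal.ofReal_pow hw0, ← ENNReal.ofReal_natCast (i * (i - 1) / 2),
      ← ENNReal.ofReal_mul (Nat.cast_nonneg _),
      ← ENNReal.ofReal_mul (by positivity),
      ← ENNReal.ofReal_mul (norm_nonneg _)]
    congr 1
    rw [hcast i]
    simp only [hSdef]
    ring
  set F : ℕ → ℕ → ℂ := fun p q => ∑' i : ℕ, f i * E i p q with hFdef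
  have hT : (∑' pq : ℕ × ℕ, (‖F pq.1 pq.2‖₊ : ℝ≥0∞))
      ≤ ENNReal.ofReal (1 / 2 * d ^ 2 * ∑' i, S i) := by
    calc (∑' pq : ℕ × ℕ, (‖F pq.1 pq.2‖₊ : ℝ≥0∞))
        ≤ ∑' pq : ℕ × ℕ, ∑' i : ℕ, (‖f i‖₊ : ℝ≥0∞) * (‖E i pq.1 pq.2‖₊ : ℝ≥0∞) :=
          ENNReal.tsum_le_tsum fun pq => CBaux.enorm_tsum_mul_le _ _
      _ = ∑' i : ℕ, (‖f i‖₊ : ℝ≥0∞) * CBaux.eF (E i) := by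
          rw [ENNReal.tsum_comm]
          exact tsum_congr fun i => by rw [CBaux.eF, ENNReal.tsum_mul_left]
      _ ≤ ∑' i : ℕ, ENNReal.ofReal (1 / 2 * d ^ 2 * S i) := by
          refine ENNReal.tsum_le_tsum fun i => ?_
          rw [← hterm i]
          exact mul_le_mul_right (hEb i) _
      _ = ENNReal.ofReal (∑' i, 1 / 2 * d ^ 2 * S i) :=
          (ENNReal.ofReal_tsum_of_nonneg
            (fun i => mul_nonneg (by positivity) (hS0 i)) (hSsum.mul_left _)).symm
      _ = ENNReal.ofReal (1 / 2 * d ^ 2 * ∑' i, S i) := by rw [tsum_mul_left]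
  have hfNorm : fNorm F = (∑' pq : ℕ × ℕ, (‖F pq.1 pq.2‖₊ : ℝ≥0∞)).toReal := by
    rw [fNorm, ENNReal.tsum_toReal_eq (fun pq => ENNReal.coe_ne_top)]
    exact tsum_congr fun pq => by simp
  have hfinal : fNorm F ≤ 1 / 2 * d ^ 2 * ∑' i, S i := by
    rw [hfNorm]
    calc (∑' pq : ℕ × ℕ, (‖F pq.1 pq.2‖₊ : ℝ≥0∞)).toReal
        ≤ (ENNReal.ofReal (1 / 2 * d ^ 2 * ∑' i, S i)).toReal :=
          ENNReal.toReal_mono ENNReal.ofReal_ne_top hT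
      _ = 1 / 2 * d ^ 2 * ∑' i, S i :=
          ENNReal.toReal_ofReal
            (mul_nonneg (by positivity) (tsum_nonneg hS0))
  exact hfinal
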